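/- For every partially signed linear permutation π⃗, the reversal distance d⃗(π⃗) to the signed identity equals the minimum, over all signed linear permutations π⃗′ agreeing in signs with π⃗, of d⃗(π⃗′). -/

import Mathlib

/-- `ReachIn R k a b`: `b` is reachable from `a` in exactly `k` steps of `R`. -/
inductive ReachIn {α : Type*} (R : α → α → Prop) : ℕ → α → α → Prop
  | refl (a : α) : ReachIn R 0 a a
  | step {k : ℕ} {a b c : α} : R a b → ReachIn R k b c → ReachIn R (k + 1) a c

/-- A partially signed sequence: a list of pairs (element, sign). -/
abbrev SP := List (ℕ × ℤ)

/-- Negation of a whole sequence: reverse the order and negate all signs. -/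
def negSeg (l : SP) : SP := (l.map fun p => (p.1, -p.2)).reverse

/-- The reversal `ρ⃗(i,j)` (1-indexed, `1 ≤ i ≤ j ≤ n`): reverse the segment of
positions `i,…,j` and negate the signs of the reversed elements. -/
def srev (i j : ℕ) (l : SP) : SP :=
  l.take (i - 1) ++ negSeg ((l.drop (i - 1)).take (j - i + 1)) ++ l.drop j

/-- One (linear) reversal step. -/
def SStep (l l' : SP) : Prop :=
  ∃ i j : ℕ, 1 ≤ i ∧ i ≤ j ∧ j ≤ l.length ∧ l' = srev i j l

/-- `l` agrees in signs with `σ`: same underlying sequence, and the signs agree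
wherever the sign of `l` is nonzero. -/
def Agrees (l σ : SP) : Prop :=
  List.Forall₂ (fun p q => p.1 = q.1 ∧ (p.2 ≠ 0 → p.2 = q.2)) l σ

/-- The reversal distance from `π` to (the class of sequences agreeing in signs
with) the signed sequence `σ`. -/
noncomputable def sdist (π σ : SP) : ℕ :=
  sInf {k : ℕ | ∃ l' : SP, ReachIn SStep k π l' ∧ Agrees l' σ}

/-- The signed identity permutation `(⟨1,+1⟩,…,⟨n,+1⟩)`. -/
def ident (n : ℕ) : SP := (List.range n).map fun t => (t + 1, 1)

/-- All signs are `+1` or `-1`. -/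
def IsSigned (l : SP) : Prop := ∀ p ∈ l, p.2 = 1 ∨ p.2 = -1

/-- All signs are in `{+1, -1, 0}`. -/
def IsPartiallySigned (l : SP) : Prop := ∀ p ∈ l, p.2 = 1 ∨ p.2 = -1 ∨ p.2 = 0

/-- The underlying sequence is a permutation of `{1,…,n}`. -/
def IsPermSeq (l : SP) : Prop := (l.map Prod.fst).Perm (List.range' 1 l.length)

lemma negSeg_length (l : SP) : (negSeg l).length = l.length := by
  simp [negSeg]

lemma negSeg_negSeg (l : SP) : negSeg (negSeg l) = l := by
  simp [negSeg, List.map_reverse, List.map_map, Function.comp_def]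

lemma srev_decomp (A B C : SP) (hB : B ≠ []) :
    srev (A.length + 1) (A.length + B.length) (A ++ (B ++ C)) = A ++ (negSeg B ++ C) := by
  simp only [srev, Nat.add_sub_cancel]
  rw [List.take_left' rfl, List.drop_left' rfl]
  have h1 : A.length + B.length - (A.length + 1) + 1 = B.length := by
    have : B.length ≠ 0 := by simpa using hB
    omega
  rw [h1, List.take_left' rfl]
  rw [show (A ++ (B ++ C)) = (A ++ B) ++ C by simp,
    List.drop_left' (by simp)]
  simp

lemma exists_decomp {i j : ℕ} {l : SP} (h1 : 1 ≤ i) (h2 : i ≤ j) (h3 : j ≤ l.length) :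
    ∃ A B C : SP, l = A ++ (B ++ C) ∧ A.length = i - 1 ∧ B.length = j - i + 1 := by
  refine ⟨l.take (i-1), (l.drop (i-1)).take (j-i+1), l.drop j, ?_, ?_, ?_⟩
  · rw [show l.drop j = ((l.drop (i-1)).drop (j-i+1)) by rw [List.drop_drop]; congr 1; omega]
    rw [List.take_append_drop, List.take_append_drop]
  · simp; omega
  · simp; omega

lemma srev_eq_of_lens {i j : ℕ} {A B C : SP} (h1 : 1 ≤ i) (hA : A.length = i - 1)
    (hB : B.length = j - i + 1) (h2 : i ≤ j) :
    srev i j (A ++ (B ++ C)) = A ++ (negSeg B ++ C) := by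
  have hi : i = A.length + 1 := by omega
  have hj : j = A.length + B.length := by omega
  subst hi hj
  exact srev_decomp A B C (by intro h; subst h; simp at h2)

lemma srev_srev {i j : ℕ} {l : SP} (h1 : 1 ≤ i) (h2 : i ≤ j) (h3 : j ≤ l.length) :
    srev i j (srev i j l) = l := by
  obtain ⟨A, B, C, rfl, hA, hB⟩ := exists_decomp h1 h2 h3
  rw [srev_eq_of_lens h1 hA hB h2,
      srev_eq_of_lens h1 hA (by rw [negSeg_length]; exact hB) h2, negSeg_negSeg]

lemma srev_length {i j : ℕ} {l : SP} (h1 : 1 ≤ i) (h2 : i ≤ j) (h3 : j ≤ l.length) :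
    (srev i j l).length = l.length := by
  obtain ⟨A, B, C, rfl, hA, hB⟩ := exists_decomp h1 h2 h3
  rw [srev_eq_of_lens h1 hA hB h2]; simp [negSeg_length]

lemma Agrees.length_eq {l σ : SP} (h : Agrees l σ) : l.length = σ.length :=
  List.Forall₂.length_eq h

lemma agrees_negSeg {l σ : SP} (h : Agrees l σ) : Agrees (negSeg l) (negSeg σ) := by
  unfold negSeg
  apply List.rel_reverse
  refine List.rel_map ?_ h
  rintro ⟨a, sa⟩ ⟨b, sb⟩ ⟨h1, h2⟩
  refine ⟨h1, fun hne => ?_⟩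
  simp only at hne ⊢
  have := h2 (by simpa using hne)
  simp only at this
  omega

lemma agrees_srev {l σ : SP} (i j : ℕ) (h : Agrees l σ) :
    Agrees (srev i j l) (srev i j σ) := by
  unfold srev
  apply List.rel_append (List.rel_append (List.forall₂_take _ h)
    (agrees_negSeg (List.forall₂_take _ (List.forall₂_drop _ h)))) (List.forall₂_drop _ h)

lemma isSigned_srev {l : SP} (i j : ℕ) (h : IsSigned l) : IsSigned (srev i j l) := by
  intro p hp
  simp only [srev, negSeg, List.mem_append, List.mem_reverse, List.mem_map] at hp
  rcases hp with (hp | ⟨q, hq, rfl⟩) | hp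
  · exact h p (List.mem_of_mem_take hp)
  · rcases h q (List.mem_of_mem_drop (List.mem_of_mem_take hq)) with h' | h' <;> simp [h']
  · exact h p (List.mem_of_mem_drop hp)

lemma ReachIn.trans {α : Type*} {R : α → α → Prop} {k m : ℕ} {a b c : α}
    (h1 : ReachIn R k a b) (h2 : ReachIn R m b c) : ReachIn R (k + m) a c := by
  induction h1 with
  | refl => simpa using h2
  | step hs _ ih => rw [Nat.add_right_comm]; exact .step hs (ih h2)

def Reach (a b : SP) : Prop := ∃ k, ReachIn SStep k a b

/-- forward transport: a path on `b` shadows to a path on `a` when `Agrees a b`. -/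
lemma transport_fwd {k : ℕ} {b b' : SP} (h : ReachIn SStep k b b') :
    ∀ a : SP, Agrees a b → ∃ a', ReachIn SStep k a a' ∧ Agrees a' b' := by
  induction h with
  | refl => exact fun a ha => ⟨a, .refl a, ha⟩
  | @step k b c _ hs _ ih =>
    intro a ha
    obtain ⟨i, j, h1, h2, h3, rfl⟩ := hs
    obtain ⟨a', hr, hag⟩ := ih (srev i j a) (agrees_srev i j ha)
    exact ⟨a', .step ⟨i, j, h1, h2, ha.length_eq ▸ h3, rfl⟩ hr, hag⟩

/-- backward transport: given a path `a →* a'` and a signed `σ'` with `Agrees a' σ'`,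
there is a signed `σ` with `Agrees a σ` and a path `σ →* σ'` of the same length. -/
lemma transport_bwd {k : ℕ} {a a' : SP} (h : ReachIn SStep k a a') :
    ∀ σ' : SP, Agrees a' σ' → IsSigned σ' →
      ∃ σ, ReachIn SStep k σ σ' ∧ Agrees a σ ∧ IsSigned σ := by
  induction h with
  | refl => exact fun σ' h1 h2 => ⟨σ', .refl σ', h1, h2⟩
  | @step k a b c hs hr ih =>
    intro σ' h1 h2
    obtain ⟨σb, hrb, hab, hsb⟩ := ih σ' h1 h2
    obtain ⟨i, j, hi, hij, hj, rfl⟩ := hs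
    refine ⟨srev i j σb, .step ⟨i, j, hi, hij, ?_, ?_⟩ hrb,
      ?_, isSigned_srev i j hsb⟩
    · rw [srev_length hi hij ?_] <;> rw [← hab.length_eq, srev_length hi hij hj] <;> exact hj
    · rw [srev_srev hi hij (by rw [← hab.length_eq, srev_length hi hij hj]; exact hj)]
    · have := agrees_srev i j hab
      rwa [srev_srev hi hij hj] at this

lemma Reach.refl (a : SP) : Reach a a := ⟨0, .refl a⟩

lemma Reach.trans {a b c : SP} (h1 : Reach a b) (h2 : Reach b c) : Reach a c := by
  obtain ⟨k, hk⟩ := h1; obtain ⟨m, hm⟩ := h2; exact ⟨k + m, hk.trans hm⟩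

lemma Reach.single {a b : SP} (h : SStep a b) : Reach a b := ⟨1, .step h (.refl b)⟩

lemma srev_cons_shift (i j : ℕ) (x : ℕ × ℤ) (l : SP) (h1 : 1 ≤ i) :
    srev (i + 1) (j + 1) (x :: l) = x :: srev i j l := by
  cases i with
  | zero => omega
  | succ m =>
    simp only [srev, Nat.add_sub_cancel, List.take_succ_cons, List.drop_succ_cons,
      List.cons_append]
    have : j + 1 - (m + 1 + 1) + 1 = j - (m + 1) + 1 := by omega
    rw [this]

lemma SStep_cons {l l' : SP} (x : ℕ × ℤ) (h : SStep l l') : SStep (x :: l) (x :: l') := by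
  obtain ⟨i, j, h1, h2, h3, rfl⟩ := h
  exact ⟨i + 1, j + 1, by omega, by omega, by simpa using h3,
    (srev_cons_shift i j x l h1).symm⟩

lemma Reach.cons {l l' : SP} (x : ℕ × ℤ) (h : Reach l l') : Reach (x :: l) (x :: l') := by
  obtain ⟨k, hk⟩ := h
  refine ⟨k, ?_⟩
  induction hk with
  | refl => exact .refl _
  | step hs _ ih => exact .step (SStep_cons x hs) ih

lemma srev_one_one (p : ℕ × ℤ) (t : SP) : srev 1 1 (p :: t) = (p.1, -p.2) :: t := by
  simp [srev, negSeg]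

lemma sstep_flip (p : ℕ × ℤ) (t : SP) : SStep (p :: t) ((p.1, -p.2) :: t) :=
  ⟨1, 1, le_refl _, le_refl _, by simp, (srev_one_one p t).symm⟩

lemma srev_one_two (p q : ℕ × ℤ) (t : SP) :
    srev 1 2 (p :: q :: t) = (q.1, -q.2) :: (p.1, -p.2) :: t := by
  simp [srev, negSeg]

def emb (L : List ℕ) : SP := L.map fun x => (x, 1)

lemma reach_swap (x y : ℕ) (t : SP) :
    Reach ((y, (1:ℤ)) :: (x, (1:ℤ)) :: t) ((x, (1:ℤ)) :: (y, (1:ℤ)) :: t) := by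
  have s1 : SStep ((y, (1:ℤ)) :: (x, (1:ℤ)) :: t) ((x, (-1:ℤ)) :: (y, (-1:ℤ)) :: t) :=
    ⟨1, 2, by omega, by omega, by simp, (srev_one_two (y,1) (x,1) t).symm⟩
  have s2 : SStep ((x, (-1:ℤ)) :: (y, (-1:ℤ)) :: t) ((x, (1:ℤ)) :: (y, (-1:ℤ)) :: t) := by
    simpa using sstep_flip (x, (-1:ℤ)) ((y, (-1:ℤ)) :: t)
  have s3 : SStep ((x, (1:ℤ)) :: (y, (-1:ℤ)) :: t) ((x, (1:ℤ)) :: (y, (1:ℤ)) :: t) := by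
    simpa using SStep_cons (x, (1:ℤ)) (sstep_flip (y, (-1:ℤ)) t)
  exact ((Reach.single s1).trans (Reach.single s2)).trans (Reach.single s3)

lemma reach_emb_of_perm {L M : List ℕ} (h : L.Perm M) : Reach (emb L) (emb M) := by
  induction h with
  | nil => exact Reach.refl _
  | cons x _ ih => exact ih.cons (x, 1)
  | swap x y l => exact reach_swap x y (emb l)
  | trans _ _ ih1 ih2 => exact ih1.trans ih2

lemma reach_plusify (l : SP) (h : IsSigned l) : Reach l (emb (l.map Prod.fst)) := by
  induction l with
  | nil => exact Reach.refl _
  | cons p t ih =>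
    obtain ⟨a, s⟩ := p
    have ht : IsSigned t := fun q hq => h q (List.mem_cons_of_mem _ hq)
    have htr := ih ht
    rcases h (a, s) List.mem_cons_self with hp | hp <;>
      simp only at hp <;> subst hp
    · simpa [emb] using htr.cons (a, (1:ℤ))
    · refine (Reach.single (sstep_flip (a, -1) t)).trans ?_
      simpa [emb] using htr.cons (a, (1:ℤ))

lemma ident_eq_emb (n : ℕ) : ident n = emb (List.range' 1 n) := by
  rw [ident, emb, List.range'_eq_map_range, List.map_map]
  exact List.map_congr_left fun x _ => by simp [Nat.add_comm]

lemma sortable {l : SP} (hs : IsSigned l)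
    (hp : (l.map Prod.fst).Perm (List.range' 1 l.length)) :
    Reach l (ident l.length) := by
  rw [ident_eq_emb]
  exact (reach_plusify l hs).trans (reach_emb_of_perm hp)

lemma agrees_ident (n : ℕ) : Agrees (ident n) (ident n) :=
  List.forall₂_same.2 fun x _ => ⟨rfl, fun _ => rfl⟩

lemma agrees_comp {a b c : SP} (h1 : Agrees a b) (h2 : Agrees b c) : Agrees a c := by
  induction h1 generalizing c with
  | nil => cases h2; exact List.Forall₂.nil
  | cons hpq h ih =>
    cases h2 with
    | cons hqr h2 =>
      exact List.Forall₂.cons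
        ⟨hpq.1.trans hqr.1, fun hne => (hpq.2 hne).trans (hqr.2 (hpq.2 hne ▸ hne))⟩ (ih h2)

lemma isSigned_ident (n : ℕ) : IsSigned (ident n) := by
  intro p hp
  simp only [ident, List.mem_map] at hp
  obtain ⟨t, _, rfl⟩ := hp
  left; rfl

lemma agrees_map_fst {l σ : SP} (h : Agrees l σ) :
    l.map Prod.fst = σ.map Prod.fst := by
  induction h with
  | nil => rfl
  | cons hpq _ ih => simp [hpq.1, ih]

/-- For every partially signed linear permutation `π`, the reversal distance of
`π` to the signed identity equals the minimum of the reversal distances of the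
signed linear permutations agreeing in signs with `π`. -/
theorem stmt4 (π : SP) (hperm : IsPermSeq π) (hps : IsPartiallySigned π) :
    sdist π (ident π.length) =
      sInf {k : ℕ | ∃ σ : SP, IsSigned σ ∧ Agrees π σ ∧ k = sdist σ (ident π.length)} := by
  set n := π.length with hn
  set S : Set ℕ := {k : ℕ | ∃ l' : SP, ReachIn SStep k π l' ∧ Agrees l' (ident n)} with hS
  set T : Set ℕ :=
    {k : ℕ | ∃ σ : SP, IsSigned σ ∧ Agrees π σ ∧ k = sdist σ (ident n)} with hT
  -- a signed completion of π
  have hcompl : ∃ σ₀ : SP, IsSigned σ₀ ∧ Agrees π σ₀ := by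
    refine ⟨π.map fun p => (p.1, if p.2 = 0 then 1 else p.2), ?_, ?_⟩
    · intro p hp
      simp only [List.mem_map] at hp
      obtain ⟨q, hq, rfl⟩ := hp
      rcases hps q hq with h | h | h <;> simp [h]
    · rw [Agrees, List.forall₂_map_right_iff]
      exact List.forall₂_same.2 fun p _ => ⟨rfl, fun hne => by simp [hne]⟩
  -- every signed permutation agreeing with π has a path to ident
  have key : ∀ σ : SP, IsSigned σ → Agrees π σ →
      ∃ k, ReachIn SStep k σ (ident n) := by
    intro σ hsg hag
    have hlen : σ.length = n := by rw [← hag.length_eq]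
    have hp : (σ.map Prod.fst).Perm (List.range' 1 σ.length) := by
      rw [← agrees_map_fst hag, hlen]; exact hperm
    obtain ⟨k, hk⟩ := sortable hsg hp
    exact ⟨k, by rwa [hlen] at hk⟩
  -- S is nonempty
  obtain ⟨σ₀, hσ₀s, hσ₀a⟩ := hcompl
  obtain ⟨k₀, hk₀⟩ := key σ₀ hσ₀s hσ₀a
  have hSne : S.Nonempty := by
    obtain ⟨a', ha', hag'⟩ := transport_fwd hk₀ π hσ₀a
    exact ⟨k₀, a', ha', agrees_comp hag' (agrees_ident n)⟩
  -- Claim B : ∀ k ∈ S, ∃ m ∈ T, m ≤ k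
  have claimB : ∀ k ∈ S, ∃ m ∈ T, m ≤ k := by
    rintro k ⟨l', hrl, hal⟩
    obtain ⟨σ, hrσ, haσ, hsσ⟩ := transport_bwd hrl (ident n) hal (isSigned_ident n)
    refine ⟨sdist σ (ident n), ⟨σ, hsσ, haσ, rfl⟩, ?_⟩
    exact Nat.sInf_le ⟨ident n, hrσ, agrees_ident n⟩
  -- Claim A : ∀ m ∈ T, m ∈ S
  have claimA : ∀ m ∈ T, m ∈ S := by
    rintro m ⟨σ, hsσ, haσ, rfl⟩
    obtain ⟨k₁, hk₁⟩ := key σ hsσ haσ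
    have hne : {k : ℕ | ∃ l' : SP, ReachIn SStep k σ l' ∧ Agrees l' (ident n)}.Nonempty :=
      ⟨k₁, ident n, hk₁, agrees_ident n⟩
    obtain ⟨l', hrl, hal⟩ := Nat.sInf_mem hne
    obtain ⟨a', hra, haa⟩ := transport_fwd hrl π haσ
    exact ⟨a', hra, agrees_comp haa hal⟩
  -- assemble
  have hTne : T.Nonempty := by
    obtain ⟨m, hm, _⟩ := claimB _ (Nat.sInf_mem hSne)
    exact ⟨m, hm⟩
  show sInf S = sInf T
  apply le_antisymm
  · exact Nat.sInf_le (claimA _ (Nat.sInf_mem hTne))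
  · obtain ⟨m, hmT, hmle⟩ := claimB _ (Nat.sInf_mem hSne)
    exact le_trans (Nat.sInf_le hmT) hmle
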